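/- Let 0 < q < 1, let t > 0 be a real number, and let k, r, ν be natural numbers with 1 ≤ k < r ≤ ν. Define f(y, z) = q^{-r(ν-r) - k(r-k)} · ([ν]_q!/([k−1]_q![r−k−1]_q![ν−r]_q!)) · (y^{k-1}/t^r) · z^{r-k-1} · ∏_{i=1}^{r-k-1} (1 − y/(q^{i} z)) · ∏_{m=1}^{ν-r} (1 − z/(q^{m-1} t)). Then the iterated Jackson q-integral ∫_0^t ( ∫_0^{q^{r-k} z} f(y, z) d_q y ) d_q z equals 1. -/

import Mathlib

/-- The `q`-number `[m]_q = (1 - q^m)/(1 - q)`. -/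
noncomputable def qnum (q : ℝ) (m : ℕ) : ℝ := (1 - q ^ m) / (1 - q)
/-- The `q`-factorial `[n]_q! = [1]_q [2]_q ⋯ [n]_q`. -/
noncomputable def qfact (q : ℝ) (n : ℕ) : ℝ := ∏ i ∈ Finset.range n, qnum q (i + 1)

/-- `(q^{n+1};q)_s` -/
noncomputable def qP (q : ℝ) (n s : ℕ) : ℝ := ∏ j ∈ Finset.range s, (1 - q ^ (n + j + 1))

section aux
variable {q : ℝ} (hq0 : 0 < q) (hq1 : q < 1)
include hq0 hq1

lemma qnum_pos (m : ℕ) : 0 < qnum q m ∨ m = 0 := by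
  rcases Nat.eq_zero_or_pos m with h | h
  · exact Or.inr h
  · left
    apply div_pos
    · have : q ^ m < 1 := pow_lt_one₀ hq0.le hq1 h.ne'
      linarith
    · linarith

lemma qnum_pos' (m : ℕ) (hm : 0 < m) : 0 < qnum q m := by
  apply div_pos
  · have : q ^ m < 1 := pow_lt_one₀ hq0.le hq1 hm.ne'
    linarith
  · linarith

lemma qfact_pos (n : ℕ) : 0 < qfact q n := by
  apply Finset.prod_pos
  intro i _
  exact qnum_pos' hq0 hq1 _ (Nat.succ_pos i)

lemma qP_nonneg (n s : ℕ) : 0 ≤ qP q n s := by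
  apply Finset.prod_nonneg
  intro j _
  have : q ^ (n + j + 1) < 1 := pow_lt_one₀ hq0.le hq1 (by omega)
  linarith

lemma qP_le_one (n s : ℕ) : qP q n s ≤ 1 := by
  apply Finset.prod_le_one
  · intro j _
    have : q ^ (n + j + 1) < 1 := pow_lt_one₀ hq0.le hq1 (by omega)
    linarith
  · intro j _
    have : 0 < q ^ (n + j + 1) := pow_pos hq0 _
    linarith

lemma summable_key (a s : ℕ) : Summable (fun n : ℕ => q ^ (n * (a + 1)) * qP q n s) := by
  apply Summable.of_nonneg_of_le
  · intro n
    exact mul_nonneg (pow_nonneg hq0.le _) (qP_nonneg hq0 hq1 _ _)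
  · intro n
    calc q ^ (n * (a + 1)) * qP q n s ≤ q ^ (n * (a + 1)) * 1 := by
          exact mul_le_mul_of_nonneg_left (qP_le_one hq0 hq1 _ _) (pow_nonneg hq0.le _)
      _ = (q ^ (a + 1)) ^ n := by rw [mul_one, ← pow_mul, mul_comm]
  · exact summable_geometric_of_lt_one (pow_nonneg hq0.le _)
      (pow_lt_one₀ hq0.le hq1 (Nat.succ_ne_zero a))

lemma key (s : ℕ) : ∀ a : ℕ, (1 - q) * ∑' n : ℕ, q ^ (n * (a + 1)) * qP q n s
    = qfact q a * qfact q s / qfact q (a + 1 + s) := by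
  induction s with
  | zero =>
    intro a
    have h1 : ∀ n : ℕ, q ^ (n * (a + 1)) * qP q n 0 = (q ^ (a + 1)) ^ n := by
      intro n
      simp [qP, ← pow_mul, mul_comm]
    rw [tsum_congr h1, tsum_geometric_of_lt_one (pow_nonneg hq0.le _)
      (pow_lt_one₀ hq0.le hq1 (Nat.succ_ne_zero a))]
    have hfa : qfact q (a + 1 + 0) = qfact q a * qnum q (a + 1) := by
      simp [qfact, Finset.prod_range_succ]
    rw [hfa]
    have h2 : qfact q a ≠ 0 := (qfact_pos hq0 hq1 a).ne'
    have h3 : (1:ℝ) - q ^ (a+1) ≠ 0 := by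
      have : q ^ (a+1) < 1 := pow_lt_one₀ hq0.le hq1 (Nat.succ_ne_zero a)
      linarith
    have h4 : (1:ℝ) - q ≠ 0 := by linarith
    have h0 : qfact q 0 = 1 := by simp [qfact]
    rw [h0, qnum]
    field_simp
  | succ s ih =>
    intro a
    have hsplit : ∀ n : ℕ, q ^ (n * (a + 1)) * qP q n (s + 1)
        = q ^ (n * (a + 1)) * qP q n s - q ^ (s + 1) * (q ^ (n * (a + 2)) * qP q n s) := by
      intro n
      rw [qP, Finset.prod_range_succ, ← qP]
      ring
    rw [tsum_congr hsplit, Summable.tsum_sub (summable_key hq0 hq1 a s)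
      ((summable_key hq0 hq1 (a+1) s).mul_left _), tsum_mul_left, mul_sub,
      ← mul_assoc, mul_comm (1-q) (q^(s+1)), mul_assoc]
    rw [ih a, ih (a + 1)]
    have e1 : qfact q (s + 1) = qfact q s * ((1 - q ^ (s + 1)) / (1 - q)) := by
      simp [qfact, Finset.prod_range_succ, qnum]; rw [div_mul_div_comm, ← pow_succ]
    have e2 : qfact q (a + 1 + s + 1) = qfact q (a + 1 + s) * ((1 - q ^ (a + 1 + s + 1)) / (1 - q)) := by
      simp [qfact, Finset.prod_range_succ, qnum]; rw [div_mul_div_comm, ← pow_succ]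
    have e3 : qfact q (a + 1) = qfact q a * ((1 - q ^ (a + 1)) / (1 - q)) := by
      simp [qfact, Finset.prod_range_succ, qnum]; rw [div_mul_div_comm, ← pow_succ]
    have e4 : a + 1 + 1 + s = a + 1 + s + 1 := by ring
    have e5 : a + 1 + (s + 1) = a + 1 + s + 1 := by ring
    rw [e4, e5, e1, e2, e3]
    have h2 : qfact q a ≠ 0 := (qfact_pos hq0 hq1 a).ne'
    have h2s : qfact q s ≠ 0 := (qfact_pos hq0 hq1 s).ne'
    have h2as : qfact q (a + 1 + s) ≠ 0 := (qfact_pos hq0 hq1 _).ne'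
    have h4 : (1:ℝ) - q ≠ 0 := by linarith
    have h5 : (1:ℝ) - q ^ (a + 1 + s + 1) ≠ 0 := by
      have : q ^ (a + 1 + s + 1) < 1 := pow_lt_one₀ hq0.le hq1 (Nat.succ_ne_zero _)
      linarith
    have h6 : (1:ℝ) - q ^ (s + 1) ≠ 0 := by
      have : q ^ (s + 1) < 1 := pow_lt_one₀ hq0.le hq1 (Nat.succ_ne_zero _)
      linarith
    have h7 : (1:ℝ) - q ^ (a + 1) ≠ 0 := by
      have : q ^ (a + 1) < 1 := pow_lt_one₀ hq0.le hq1 (Nat.succ_ne_zero _)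
      linarith
    field_simp
    ring
end aux

/-- The iterated Jackson `q`-integral `∫_0^t (∫_0^{q^{r-k} z} f(y,z) d_q y) d_q z` of the
joint `q`-density of the `k`-th and `r`-th `q`-order statistics (a `q`-Dirichlet density)
equals `1`. -/
theorem stmt17 (q t : ℝ) (hq0 : 0 < q) (hq1 : q < 1) (ht : 0 < t) (k r ν : ℕ)
    (hk : 1 ≤ k) (hkr : k < r) (hrν : r ≤ ν)
    (f : ℝ → ℝ → ℝ)
    (hf : ∀ y z : ℝ, f y z
      = q ^ (-((r : ℤ) * ((ν : ℤ) - (r : ℤ))) - (k : ℤ) * ((r : ℤ) - (k : ℤ)))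
          * (qfact q ν / (qfact q (k - 1) * qfact q (r - k - 1) * qfact q (ν - r)))
          * (y ^ (k - 1) / t ^ r) * z ^ (r - k - 1)
          * (∏ i ∈ Finset.range (r - k - 1), (1 - y / (q ^ (i + 1) * z)))
          * (∏ m ∈ Finset.range (ν - r), (1 - z / (q ^ m * t)))) :
    (1 - q) * t * ∑' m : ℕ, q ^ m *
        ((1 - q) * (q ^ (r - k) * (q ^ m * t)) *
          ∑' n : ℕ, q ^ n * f (q ^ (r - k) * (q ^ m * t) * q ^ n) (q ^ m * t))
      = 1 := by
  obtain ⟨a, rfl⟩ : ∃ a, k = a + 1 := ⟨k - 1, by omega⟩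
  obtain ⟨s1, rfl⟩ : ∃ s1, r = a + 1 + s1 + 1 := ⟨r - a - 2, by omega⟩
  obtain ⟨s2, rfl⟩ : ∃ s2, ν = a + 1 + s1 + 1 + s2 := ⟨ν - (a + 1 + s1 + 1), by omega⟩
  have hq' : q ≠ 0 := hq0.ne'
  have ht' : t ≠ 0 := ht.ne'
  have h1q : (1 : ℝ) - q ≠ 0 := by linarith
  have hmt : ∀ m : ℕ, q ^ m * t ≠ 0 := fun m => mul_ne_zero (pow_ne_zero _ hq') ht'
  have hsub2 : a + 1 + s1 + 1 - (a + 1) = s1 + 1 := by omega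
  simp only [hsub2]
  -- rewritten density
  have hf' : ∀ y z : ℝ, f y z
      = (q ^ ((a + 1 + s1 + 1) * s2 + (a + 1) * (s1 + 1)))⁻¹
          * (qfact q (a + 1 + s1 + 1 + s2) / (qfact q a * qfact q s1 * qfact q s2))
          * (y ^ a / t ^ (a + 1 + s1 + 1)) * z ^ s1
          * (∏ i ∈ Finset.range s1, (1 - y / (q ^ (i + 1) * z)))
          * (∏ m ∈ Finset.range s2, (1 - z / (q ^ m * t))) := by
    intro y z
    rw [hf]
    have e1 : a + 1 - 1 = a := by omega
    have e2 : a + 1 + s1 + 1 - (a + 1) - 1 = s1 := by omega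
    have e3 : a + 1 + s1 + 1 + s2 - (a + 1 + s1 + 1) = s2 := by omega
    have e4 : q ^ (-((((a + 1 + s1 + 1) : ℕ) : ℤ) * (((a + 1 + s1 + 1 + s2 : ℕ) : ℤ)
          - ((a + 1 + s1 + 1 : ℕ) : ℤ))) - (((a + 1 : ℕ) : ℤ)) * (((a + 1 + s1 + 1 : ℕ) : ℤ)
          - ((a + 1 : ℕ) : ℤ)))
        = (q ^ ((a + 1 + s1 + 1) * s2 + (a + 1) * (s1 + 1)))⁻¹ := by
      rw [show (-((((a + 1 + s1 + 1) : ℕ) : ℤ) * (((a + 1 + s1 + 1 + s2 : ℕ) : ℤ)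
          - ((a + 1 + s1 + 1 : ℕ) : ℤ))) - (((a + 1 : ℕ) : ℤ)) * (((a + 1 + s1 + 1 : ℕ) : ℤ)
          - ((a + 1 : ℕ) : ℤ)))
          = -(((a + 1 + s1 + 1) * s2 + (a + 1) * (s1 + 1) : ℕ) : ℤ) from by push_cast; ring,
        zpow_neg, zpow_natCast]
    rw [e1, e2, e3, e4]
  -- inner product rewrite
  have hprod : ∀ m n : ℕ,
      (∏ i ∈ Finset.range s1, (1 - (q ^ (s1 + 1) * (q ^ m * t) * q ^ n) / (q ^ (i + 1) * (q ^ m * t))))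
        = qP q n s1 := by
    intro m n
    rw [qP, ← Finset.prod_range_reflect (fun j => 1 - q ^ (n + j + 1)) s1]
    refine Finset.prod_congr rfl fun i hi => ?_
    rw [Finset.mem_range] at hi
    congr 1
    have key' : q ^ (s1 + 1) * (q ^ m * t) * q ^ n
        = (q ^ (i + 1) * (q ^ m * t)) * q ^ (n + (s1 - 1 - i) + 1) := by
      rw [show s1 + 1 = (i + 1) + ((s1 - 1 - i) + 1) from by omega]
      ring
    rw [key', mul_div_cancel_left₀ _ (mul_ne_zero (pow_ne_zero _ hq') (hmt m))]
  have hprod2 : ∀ m : ℕ,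
      (∏ m' ∈ Finset.range s2, (1 - (q ^ m * t) / (q ^ m' * t)))
        = ∏ m' ∈ Finset.range s2, (1 - q ^ m / q ^ m') := by
    intro m
    refine Finset.prod_congr rfl fun i _ => ?_
    rw [mul_div_mul_right _ _ ht']
  -- inner pointwise identity
  have inner : ∀ m n : ℕ,
      q ^ n * f (q ^ (s1 + 1) * (q ^ m * t) * q ^ n) (q ^ m * t)
      = ((q ^ ((a + 1 + s1 + 1) * s2 + (a + 1) * (s1 + 1)))⁻¹
          * (qfact q (a + 1 + s1 + 1 + s2) / (qfact q a * qfact q s1 * qfact q s2))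
          * (q ^ ((s1 + 1) * a) * q ^ (m * a) * t ^ a / t ^ (a + 1 + s1 + 1))
          * (q ^ (m * s1) * t ^ s1)
          * ∏ m' ∈ Finset.range s2, (1 - q ^ m / q ^ m'))
        * (q ^ (n * (a + 1)) * qP q n s1) := by
    intro m n
    rw [hf', hprod m n, hprod2 m]
    have h1 : (q ^ (s1 + 1) * (q ^ m * t) * q ^ n) ^ a
        = q ^ ((s1 + 1) * a) * q ^ (m * a) * t ^ a * q ^ (n * a) := by
      rw [mul_pow, mul_pow, mul_pow, ← pow_mul, ← pow_mul, ← pow_mul]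
      ring
    have h2 : (q ^ m * t) ^ s1 = q ^ (m * s1) * t ^ s1 := by
      rw [mul_pow, ← pow_mul]
    have h3 : q ^ n * q ^ (n * a) = q ^ (n * (a + 1)) := by
      rw [← pow_add]; ring_nf
    rw [h1, h2, ← h3]
    ring
  -- outer pointwise identity
  have outer : ∀ m : ℕ,
      q ^ m * ((1 - q) * (q ^ (s1 + 1) * (q ^ m * t)) *
        ∑' n : ℕ, q ^ n * f (q ^ (s1 + 1) * (q ^ m * t) * q ^ n) (q ^ m * t))
      = ((1 - q) * q ^ (s1 + 1) * t
          * (q ^ ((a + 1 + s1 + 1) * s2 + (a + 1) * (s1 + 1)))⁻¹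
          * (qfact q (a + 1 + s1 + 1 + s2) / (qfact q a * qfact q s1 * qfact q s2))
          * (q ^ ((s1 + 1) * a) * t ^ a / t ^ (a + 1 + s1 + 1)) * t ^ s1
          * ∑' n : ℕ, q ^ (n * (a + 1)) * qP q n s1)
        * (q ^ (m * (a + s1 + 1 + 1)) * ∏ m' ∈ Finset.range s2, (1 - q ^ m / q ^ m')) := by
    intro m
    rw [tsum_congr (inner m), tsum_mul_left]
    have h4 : q ^ (m * (a + s1 + 1 + 1)) = q ^ m * q ^ m * q ^ (m * a) * q ^ (m * s1) := by
      rw [← pow_add, ← pow_add, ← pow_add]; ring_nf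
    rw [h4]
    ring
  rw [tsum_congr outer, tsum_mul_left]
  -- evaluate the outer sum
  have hPi2zero : ∀ m, m < s2 →
      q ^ (m * (a + s1 + 1 + 1)) * ∏ m' ∈ Finset.range s2, (1 - q ^ m / q ^ m') = 0 := by
    intro m hm
    rw [Finset.prod_eq_zero (Finset.mem_range.mpr hm)
      (by rw [div_self (pow_ne_zero _ hq')]; ring), mul_zero]
  have hPi2eq : ∀ i : ℕ,
      (∏ m' ∈ Finset.range s2, (1 - q ^ (i + s2) / q ^ m')) = qP q i s2 := by
    intro i
    rw [qP, ← Finset.prod_range_reflect (fun j => 1 - q ^ (i + j + 1)) s2]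
    refine Finset.prod_congr rfl fun m' hm' => ?_
    rw [Finset.mem_range] at hm'
    congr 1
    rw [show i + s2 = (i + (s2 - 1 - m') + 1) + m' from by omega, pow_add,
      mul_div_cancel_right₀ _ (pow_ne_zero _ hq')]
  have hPi2mem : ∀ m, s2 ≤ m → ∀ m' ∈ Finset.range s2,
      0 ≤ 1 - q ^ m / q ^ m' ∧ 1 - q ^ m / q ^ m' ≤ 1 := by
    intro m hm m' hm'
    rw [Finset.mem_range] at hm'
    rw [div_eq_mul_inv, ← pow_sub₀ q hq' (by omega : m' ≤ m)]
    constructor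
    · have : q ^ (m - m') ≤ 1 := pow_le_one₀ hq0.le hq1.le
      linarith
    · have : 0 < q ^ (m - m') := pow_pos hq0 _
      linarith
  have hsum : Summable (fun m : ℕ =>
      q ^ (m * (a + s1 + 1 + 1)) * ∏ m' ∈ Finset.range s2, (1 - q ^ m / q ^ m')) := by
    refine Summable.of_nonneg_of_le ?_ ?_ (summable_geometric_of_lt_one
      (pow_nonneg hq0.le (a + s1 + 1 + 1)) (pow_lt_one₀ hq0.le hq1 (by omega)))
    · intro m
      rcases lt_or_ge m s2 with hm | hm
      · rw [hPi2zero m hm]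
      · exact mul_nonneg (pow_nonneg hq0.le _)
          (Finset.prod_nonneg fun m' hm' => (hPi2mem m hm m' hm').1)
    · intro m
      rcases lt_or_ge m s2 with hm | hm
      · rw [hPi2zero m hm]
        positivity
      · calc q ^ (m * (a + s1 + 1 + 1)) * ∏ m' ∈ Finset.range s2, (1 - q ^ m / q ^ m')
            ≤ q ^ (m * (a + s1 + 1 + 1)) * 1 := by
              refine mul_le_mul_of_nonneg_left ?_ (pow_nonneg hq0.le _)
              exact Finset.prod_le_one (fun m' hm' => (hPi2mem m hm m' hm').1)
                (fun m' hm' => (hPi2mem m hm m' hm').2)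
          _ = (q ^ (a + s1 + 1 + 1)) ^ m := by rw [mul_one, ← pow_mul, mul_comm]
  have hS2 : (∑' m : ℕ, q ^ (m * (a + s1 + 1 + 1)) * ∏ m' ∈ Finset.range s2, (1 - q ^ m / q ^ m'))
      = q ^ (s2 * (a + s1 + 1 + 1)) * ∑' i : ℕ, q ^ (i * (a + s1 + 1 + 1)) * qP q i s2 := by
    rw [← Summable.sum_add_tsum_nat_add s2 hsum,
      Finset.sum_eq_zero (fun m hm => hPi2zero m (Finset.mem_range.mp hm)), zero_add]
    rw [show (∑' i : ℕ, q ^ ((i + s2) * (a + s1 + 1 + 1)) * ∏ m' ∈ Finset.range s2, (1 - q ^ (i + s2) / q ^ m'))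
        = ∑' i : ℕ, q ^ (s2 * (a + s1 + 1 + 1)) * (q ^ (i * (a + s1 + 1 + 1)) * qP q i s2) from
      tsum_congr fun i => by
        rw [hPi2eq i, show (i + s2) * (a + s1 + 1 + 1)
          = s2 * (a + s1 + 1 + 1) + i * (a + s1 + 1 + 1) from by ring, pow_add]
        ring, tsum_mul_left]
  rw [hS2]
  -- plug in the two beta values
  have hLk : (∑' n : ℕ, q ^ (n * (a + 1)) * qP q n s1)
      = (qfact q a * qfact q s1 / qfact q (a + 1 + s1)) / (1 - q) := by
    rw [eq_div_iff h1q, mul_comm]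
    exact key hq0 hq1 s1 a
  have hL2 : (∑' n : ℕ, q ^ (n * (a + s1 + 1 + 1)) * qP q n s2)
      = (qfact q (a + s1 + 1) * qfact q s2 / qfact q (a + 1 + s1 + 1 + s2)) / (1 - q) := by
    rw [eq_div_iff h1q, mul_comm]
    have := key hq0 hq1 s2 (a + s1 + 1)
    rwa [show a + s1 + 1 + 1 + s2 = a + 1 + s1 + 1 + s2 from by omega] at this
  rw [hLk, hL2]
  have hfa : qfact q a ≠ 0 := (qfact_pos hq0 hq1 _).ne'
  have hfs1 : qfact q s1 ≠ 0 := (qfact_pos hq0 hq1 _).ne'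
  have hfs2 : qfact q s2 ≠ 0 := (qfact_pos hq0 hq1 _).ne'
  have hfas1 : qfact q (a + 1 + s1) ≠ 0 := (qfact_pos hq0 hq1 _).ne'
  have hfas1' : qfact q (a + s1 + 1) = qfact q (a + 1 + s1) := by
    rw [show a + s1 + 1 = a + 1 + s1 from by omega]
  have hfν : qfact q (a + 1 + s1 + 1 + s2) ≠ 0 := (qfact_pos hq0 hq1 _).ne'
  rw [hfas1']
  have hqpow : (q : ℝ) ^ ((a + 1 + s1 + 1) * s2 + (a + 1) * (s1 + 1)) ≠ 0 := pow_ne_zero _ hq'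
  field_simp
  ring
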